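/- For n ≥ 3, the brushing number of the star K_{1,n} equals ⌈n/2⌉. -/

import Mathlib

open scoped BigOperators

namespace Paper

variable {V : Type*}

/-- The zero-forcing closure: vertices that eventually become black starting from `S`. -/
inductive ZFClosure (G : SimpleGraph V) (S : Set V) : V → Prop
  | init {v : V} : v ∈ S → ZFClosure G S v
  | force {v w : V} : ZFClosure G S v → G.Adj v w →
      (∀ u, G.Adj v u → u ≠ w → ZFClosure G S u) → ZFClosure G S w

/-- `S` is a zero-forcing set of `G`. -/
def IsZeroForcingSet (G : SimpleGraph V) (S : Set V) : Prop :=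
  ∀ v : V, ZFClosure G S v

/-- The zero-forcing number `Z(G)`. -/
noncomputable def zfNumber (G : SimpleGraph V) : ℕ :=
  sInf {n | ∃ S : Set V, IsZeroForcingSet G S ∧ S.ncard = n}

/-- A state of the brushing process: the set of vertices that have fired (and hence
are clean), the set of dirty edges, and the number of brushes at each vertex. -/
structure BrushConfig (V : Type*) where
  fired : Set V
  dirty : Set (Sym2 V)
  brushes : V → ℕ

open Classical in
def BrushStep (G : SimpleGraph V) (restricted : Bool) (c c' : BrushConfig V) : Prop :=
  ∃ (v : V) (f : Sym2 V → ℕ),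
    v ∉ c.fired ∧
    (∀ e ∈ c.dirty, v ∈ e → if restricted then f e = 1 else 1 ≤ f e) ∧
    (∑ᶠ e ∈ {e ∈ c.dirty | v ∈ e}, f e) ≤ c.brushes v ∧
    c'.fired = insert v c.fired ∧
    c'.dirty = {e ∈ c.dirty | v ∉ e} ∧
    ∀ w : V, c'.brushes w =
      (if w = v then 0 else c.brushes w) + c.dirty.indicator f s(v, w)

/-- The initial brush configuration `ω` cleans the graph `G`:  starting with every vertex
and every edge dirty, some sequence of firings results in every vertex having fired. -/
def Cleans (G : SimpleGraph V) (restricted : Bool) (ω : V → ℕ) : Prop :=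
  ∃ c : BrushConfig V,
    Relation.ReflTransGen (BrushStep G restricted) ⟨∅, G.edgeSet, ω⟩ c ∧
    c.fired = Set.univ

/-- The brushing number `B(G)` (several brushes may traverse a single edge). -/
noncomputable def brushNumber (G : SimpleGraph V) : ℕ :=
  sInf {n | ∃ ω : V → ℕ, Cleans G false ω ∧ ∑ᶠ v, ω v = n}

/-- The restricted brushing number `b(G)` (each edge is traversed by exactly one brush). -/
noncomputable def brushNumber' (G : SimpleGraph V) : ℕ :=
  sInf {n | ∃ ω : V → ℕ, Cleans G true ω ∧ ∑ᶠ v, ω v = n}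


/-- The star `K_{1,n}`: vertex `0` is the centre, adjacent to the `n` leaves. -/
def starGraph (n : ℕ) : SimpleGraph (Fin (n + 1)) where
  Adj i j := i ≠ j ∧ (i = 0 ∨ j = 0)
  symm := ⟨by rintro i j ⟨h, hc⟩; exact ⟨h.symm, hc.symm⟩⟩
  loopless := ⟨by rintro i ⟨h, _⟩; exact h rfl⟩

/-! ### Auxiliary material for the star graph -/

lemma star_mem_edgeSet {n : ℕ} {e : Sym2 (Fin (n+1))} :
    e ∈ (starGraph n).edgeSet ↔ ∃ j : Fin (n+1), j ≠ 0 ∧ e = s(0, j) := by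
  induction e using Sym2.ind with
  | _ a b =>
    rw [SimpleGraph.mem_edgeSet]
    show (a ≠ b ∧ (a = 0 ∨ b = 0)) ↔ _
    constructor
    · rintro ⟨hab, rfl | rfl⟩
      · exact ⟨b, fun h => hab h.symm, rfl⟩
      · exact ⟨a, fun h => hab h, Sym2.eq_swap⟩
    · rintro ⟨j, hj, he⟩
      rw [Sym2.eq_iff] at he
      rcases he with ⟨rfl, rfl⟩ | ⟨rfl, rfl⟩
      · exact ⟨fun h => hj h.symm, Or.inl rfl⟩
      · exact ⟨hj, Or.inr rfl⟩

lemma finsum_mem_ones {α : Type*} {s : Set α} (hs : s.Finite) :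
    ∑ᶠ e ∈ s, (1 : ℕ) = s.ncard := by
  rw [finsum_mem_eq_finite_toFinset_sum _ hs, Finset.sum_const, smul_eq_mul, mul_one,
    Set.ncard_eq_toFinset_card _ hs]

/-- Configurations during phase 1 (leaves `1,…,k` have fired). -/
def Acfg (n m k : ℕ) : BrushConfig (Fin (n+1)) where
  fired := {i | 1 ≤ (i : ℕ) ∧ (i : ℕ) ≤ k}
  dirty := {e | ∃ j : Fin (n+1), k < (j : ℕ) ∧ e = s(0, j)}
  brushes := fun i =>
    if i = 0 then k else if (i : ℕ) ≤ k then 0 else if (i : ℕ) ≤ m then 1 else 0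

/-- Configurations during phase 3 (all of `0,…,k` have fired, no dirty edges). -/
def Ccfg (n k : ℕ) : BrushConfig (Fin (n+1)) where
  fired := {i | (i : ℕ) ≤ k}
  dirty := ∅
  brushes := fun i => if k < (i : ℕ) then 1 else 0

/-- The initial brush allocation used for the star. -/
def starW (n m : ℕ) : Fin (n+1) → ℕ := fun i =>
  if i = 0 then 0 else if (i : ℕ) ≤ m then 1 else 0

lemma Acfg_zero (n m : ℕ) :
    Acfg n m 0 = ⟨∅, (starGraph n).edgeSet, starW n m⟩ := by
  unfold Acfg
  congr 1
  · ext i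
    simp only [Set.mem_setOf_eq, Set.mem_empty_iff_false, iff_false]
    omega
  · ext e
    rw [Set.mem_setOf_eq, star_mem_edgeSet]
    constructor <;> rintro ⟨j, hj, rfl⟩
    · refine ⟨j, ?_, rfl⟩
      simp only [ne_eq, Fin.ext_iff, Fin.val_zero]
      omega
    · refine ⟨j, ?_, rfl⟩
      simp only [ne_eq, Fin.ext_iff, Fin.val_zero] at hj
      omega
  · funext i
    simp only [starW, Fin.ext_iff, Fin.val_zero]
    split_ifs <;> first | omega | simp_all

lemma stepA {n m k : ℕ} (hk : k < m) (hm : m ≤ n) :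
    BrushStep (starGraph n) false (Acfg n m k) (Acfg n m (k+1)) := by
  have hkn : k + 1 < n + 1 := by omega
  set v : Fin (n+1) := ⟨k+1, hkn⟩ with hv
  have hv0 : v ≠ 0 := by simp [hv, Fin.ext_iff]
  refine ⟨v, fun _ => 1, ?_, ?_, ?_, ?_, ?_, ?_⟩
  · simp only [Acfg, Set.mem_setOf_eq, hv]
    omega
  · intro e he hve
    simp
  · have hset : {e ∈ (Acfg n m k).dirty | v ∈ e} = {s((0 : Fin (n+1)), v)} := by
      ext e
      simp only [Acfg, Set.mem_setOf_eq, Set.mem_singleton_iff]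
      constructor
      · rintro ⟨⟨j, hj, rfl⟩, hmem⟩
        rw [Sym2.mem_iff] at hmem
        rcases hmem with h | h
        · exact absurd h hv0
        · rw [h]
      · rintro rfl
        exact ⟨⟨v, by simp [hv], rfl⟩, by simp⟩
    rw [hset, finsum_mem_singleton]
    simp only [Acfg, hv, Fin.ext_iff, Fin.val_zero, Fin.val_mk]
    split_ifs <;> first | omega | simp_all
  · ext i
    simp only [Acfg, Set.mem_insert_iff, Set.mem_setOf_eq, hv, Fin.ext_iff, Fin.val_mk,
      Fin.val_zero]
    omega
  · ext e
    simp only [Acfg, Set.mem_setOf_eq]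
    constructor
    · rintro ⟨j, hj, rfl⟩
      refine ⟨⟨j, by omega, rfl⟩, ?_⟩
      rw [Sym2.mem_iff]
      push_neg
      refine ⟨hv0, ?_⟩
      simp only [ne_eq, hv, Fin.ext_iff, Fin.val_mk]
      omega
    · rintro ⟨⟨j, hj, rfl⟩, hmem⟩
      refine ⟨j, ?_, rfl⟩
      rw [Sym2.mem_iff] at hmem
      push_neg at hmem
      have := hmem.2
      simp only [ne_eq, hv, Fin.ext_iff, Fin.val_mk] at this
      omega
  · intro w
    have hind : (Acfg n m k).dirty.indicator (fun _ => (1 : ℕ)) s(v, w)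
        = if w = 0 then 1 else 0 := by
      by_cases hw : w = 0
      · subst hw
        rw [if_pos rfl, Set.indicator_of_mem]
        exact ⟨v, by simp [hv], Sym2.eq_swap⟩
      · rw [if_neg hw, Set.indicator_of_notMem]
        rintro ⟨j, hj, he⟩
        rw [Sym2.eq_iff] at he
        rcases he with ⟨h1, h2⟩ | ⟨h1, h2⟩
        · exact hv0 h1
        · exact hw h2
    rw [hind]
    simp only [Acfg, hv, Fin.ext_iff, Fin.val_zero, Fin.val_mk]
    split_ifs <;> first | omega | simp_all

lemma stepB {n m : ℕ} (hm : m ≤ n) (hnm : n - m ≤ m) (hm1 : 1 ≤ m) :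
    BrushStep (starGraph n) false (Acfg n m m) (Ccfg n m) := by
  refine ⟨0, fun _ => 1, ?_, ?_, ?_, ?_, ?_, ?_⟩
  · simp [Acfg]
  · intro e he hve
    simp
  · have hset : {e ∈ (Acfg n m m).dirty | (0 : Fin (n+1)) ∈ e} = (Acfg n m m).dirty := by
      ext e
      simp only [Set.mem_setOf_eq, and_iff_left_iff_imp, Acfg]
      rintro ⟨j, hj, rfl⟩
      simp
    have himg : (Acfg n m m).dirty
        = (fun j : Fin (n+1) => s((0 : Fin (n+1)), j)) '' {j | m < (j : ℕ)} := by
      ext e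
      simp only [Acfg, Set.mem_setOf_eq, Set.mem_image]
      constructor
      · rintro ⟨j, hj, rfl⟩; exact ⟨j, hj, rfl⟩
      · rintro ⟨j, hj, rfl⟩; exact ⟨j, hj, rfl⟩
    have hcard : (Acfg n m m).dirty.ncard = n - m := by
      rw [himg, Set.ncard_image_of_injOn]
      · have : {j : Fin (n+1) | m < (j : ℕ)}.toFinset
            = Finset.Ioi (⟨m, by omega⟩ : Fin (n+1)) := by
          ext j
          simp [Fin.lt_def]
        rw [Set.ncard_eq_toFinset_card', this, Fin.card_Ioi]
        simp
      · intro a ha b hb hab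
        rw [Sym2.eq_iff] at hab
        rcases hab with ⟨_, h⟩ | ⟨h1, h2⟩
        · exact h
        · exact h2.trans h1
    have hb : (Acfg n m m).brushes 0 = m := by simp [Acfg]
    rw [hset, finsum_mem_ones (Set.toFinite _), hcard, hb]
    exact hnm
  · ext i
    simp only [Ccfg, Acfg, Set.mem_insert_iff, Set.mem_setOf_eq, Fin.ext_iff, Fin.val_zero]
    omega
  · ext e
    simp only [Ccfg, Acfg, Set.mem_setOf_eq, Set.mem_empty_iff_false, false_iff, not_and,
      not_not]
    rintro ⟨j, hj, rfl⟩
    simp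
  · intro w
    have hind : (Acfg n m m).dirty.indicator (fun _ => (1 : ℕ)) s((0 : Fin (n+1)), w)
        = if m < (w : ℕ) then 1 else 0 := by
      by_cases hw : m < (w : ℕ)
      · rw [if_pos hw, Set.indicator_of_mem]
        exact ⟨w, hw, rfl⟩
      · rw [if_neg hw, Set.indicator_of_notMem]
        rintro ⟨j, hj, he⟩
        rw [Sym2.eq_iff] at he
        rcases he with ⟨h1, h2⟩ | ⟨h1, h2⟩
        · exact hw (h2 ▸ hj)
        · rw [← h1] at hj
          simp at hj
    rw [hind]
    simp only [Ccfg, Acfg, Fin.ext_iff, Fin.val_zero]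
    split_ifs <;> first | omega | simp_all

lemma stepC {n k : ℕ} (hk : k < n) :
    BrushStep (starGraph n) false (Ccfg n k) (Ccfg n (k+1)) := by
  have hkn : k + 1 < n + 1 := by omega
  set v : Fin (n+1) := ⟨k+1, hkn⟩ with hv
  refine ⟨v, fun _ => 0, ?_, ?_, ?_, ?_, ?_, ?_⟩
  · simp only [Ccfg, Set.mem_setOf_eq, hv, Fin.val_mk]
    omega
  · intro e he hve
    exact absurd he (Set.notMem_empty e)
  · have : {e ∈ (Ccfg n k).dirty | v ∈ e} = (∅ : Set (Sym2 (Fin (n+1)))) := by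
      simp [Ccfg]
    rw [this, finsum_mem_empty]
    exact Nat.zero_le _
  · ext i
    simp only [Ccfg, Set.mem_insert_iff, Set.mem_setOf_eq, hv, Fin.ext_iff, Fin.val_mk]
    omega
  · simp [Ccfg]
  · intro w
    simp only [Ccfg, Set.indicator_empty, Pi.zero_apply, add_zero, hv, Fin.ext_iff, Fin.val_mk]
    split_ifs <;> first | omega | simp_all

lemma chainA {n m : ℕ} (hm : m ≤ n) : ∀ k, k ≤ m →
    Relation.ReflTransGen (BrushStep (starGraph n) false) (Acfg n m 0) (Acfg n m k) := by
  intro k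
  induction k with
  | zero => intro _; exact Relation.ReflTransGen.refl
  | succ k ih =>
    intro hk
    exact (ih (by omega)).tail (stepA (by omega) hm)

lemma chainC {n : ℕ} (m : ℕ) : ∀ k, m ≤ k → k ≤ n →
    Relation.ReflTransGen (BrushStep (starGraph n) false) (Ccfg n m) (Ccfg n k) := by
  intro k
  induction k with
  | zero => intro h1 _; have : m = 0 := by omega
            subst this; exact Relation.ReflTransGen.refl
  | succ k ih =>
    intro h1 h2
    rcases Nat.lt_or_ge m (k+1) with h | h
    · exact (ih (by omega) (by omega)).tail (stepC (by omega))
    · have : m = k + 1 := by omega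
      subst this; exact Relation.ReflTransGen.refl

lemma starW_sum (n m : ℕ) (hm : m ≤ n) : ∑ᶠ v, starW n m v = m := by
  rw [finsum_eq_sum_of_fintype]
  have h1 : ∀ i : Fin (n+1), starW n m i = if i ∈ Finset.Ioc (0 : Fin (n+1)) ⟨m, by omega⟩
      then 1 else 0 := by
    intro i
    simp only [starW, Finset.mem_Ioc, Fin.lt_def, Fin.le_def, Fin.val_zero, Fin.ext_iff]
    split_ifs <;> first | omega | simp_all
  rw [Finset.sum_congr rfl fun i _ => h1 i, Finset.sum_ite_mem, Finset.univ_inter,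
    Finset.sum_const, smul_eq_mul, mul_one, Fin.card_Ioc]
  simp

lemma star_cleans (n m : ℕ) (hm : m ≤ n) (hnm : n - m ≤ m) (hm1 : 1 ≤ m) :
    Cleans (starGraph n) false (starW n m) := by
  refine ⟨Ccfg n n, ?_, ?_⟩
  · have h0 : (⟨∅, (starGraph n).edgeSet, starW n m⟩ : BrushConfig (Fin (n+1)))
        = Acfg n m 0 := (Acfg_zero n m).symm
    rw [h0]
    exact ((chainA hm m le_rfl).tail (stepB hm hnm hm1)).trans (chainC m n hm le_rfl)
  · ext i
    simp only [Ccfg, Set.mem_setOf_eq, Set.mem_univ, iff_true]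
    omega

/-! ### Lower bound -/

lemma single_le_finsum_mem {α : Type*} {s : Set α} (hs : s.Finite) {f : α → ℕ} {a : α}
    (ha : a ∈ s) : f a ≤ ∑ᶠ e ∈ s, f e := by
  rw [finsum_mem_eq_finite_toFinset_sum _ hs]
  exact Finset.single_le_sum (fun i _ => Nat.zero_le _) (hs.mem_toFinset.mpr ha)

lemma finsum_mem_mono {α : Type*} {s t : Set α} (hsub : s ⊆ t) (ht : t.Finite) (f : α → ℕ) :
    ∑ᶠ e ∈ s, f e ≤ ∑ᶠ e ∈ t, f e := by
  rw [finsum_mem_eq_finite_toFinset_sum _ (ht.subset hsub),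
    finsum_mem_eq_finite_toFinset_sum _ ht]
  refine Finset.sum_le_sum_of_subset ?_
  intro x hx
  rw [Set.Finite.mem_toFinset] at hx ⊢
  exact hsub hx

lemma ncard_le_finsum {α : Type*} {s : Set α} (hs : s.Finite) {f : α → ℕ}
    (h1 : ∀ e ∈ s, 1 ≤ f e) : s.ncard ≤ ∑ᶠ e ∈ s, f e := by
  rw [finsum_mem_eq_finite_toFinset_sum _ hs, Set.ncard_eq_toFinset_card _ hs,
    Finset.card_eq_sum_ones]
  exact Finset.sum_le_sum fun i hi => h1 i (hs.mem_toFinset.mp hi)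

/-- The invariant maintained while the centre has not yet fired. -/
def Good (n : ℕ) (ω : Fin (n+1) → ℕ) (c : BrushConfig (Fin (n+1))) : Prop :=
  0 ∉ c.fired ∧
  (∀ i : Fin (n+1), i ≠ 0 → i ∉ c.fired → s(0, i) ∈ c.dirty) ∧
  c.dirty ⊆ (starGraph n).edgeSet ∧
  (∀ i : Fin (n+1), i ≠ 0 → c.brushes i ≤ ω i) ∧
  c.brushes 0 + c.fired.ncard ≤ ω 0 + 2 * ∑ᶠ i ∈ c.fired, ω i

lemma omega_split (n : ℕ) (ω : Fin (n+1) → ℕ) :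
    ∑ᶠ v, ω v = ω 0 + ∑ᶠ i ∈ {i : Fin (n+1) | i ≠ 0}, ω i := by
  rw [finsum_eq_sum_of_fintype, finsum_mem_eq_finite_toFinset_sum _ (Set.toFinite _)]
  have hT : ({i : Fin (n+1) | i ≠ 0}).toFinite.toFinset = Finset.univ.erase 0 := by
    ext i
    simp [Finset.mem_erase]
  rw [hT]
  exact (Finset.add_sum_erase _ ω (Finset.mem_univ 0)).symm

lemma ncard_ne_zero (n : ℕ) : ({i : Fin (n+1) | i ≠ 0}).ncard = n := by
  have h : ({i : Fin (n+1) | i ≠ 0}) = ({0} : Set (Fin (n+1)))ᶜ := by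
    ext i; simp
  have := Set.ncard_add_ncard_compl ({0} : Set (Fin (n+1)))
  rw [Set.ncard_singleton, Nat.card_eq_fintype_card, Fintype.card_fin] at this
  rw [h]
  omega

lemma invariant_step {n : ℕ} (ω : Fin (n+1) → ℕ) {b c : BrushConfig (Fin (n+1))}
    (hg : Good n ω b) (hbc : BrushStep (starGraph n) false b c) :
    Good n ω c ∨ n ≤ 2 * ∑ᶠ v, ω v := by
  obtain ⟨h0, ha, he, hc, hb⟩ := hg
  obtain ⟨v, f, hvf, hf1, hsum, hfi, hdi, hbr⟩ := hbc
  have hFfin : b.fired.Finite := Set.toFinite _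
  by_cases hv : v = 0
  · -- the centre fires now; we extract the global lower bound
    subst hv
    right
    -- the fired set consists of leaves only
    have hsub : b.fired ⊆ {i : Fin (n+1) | i ≠ 0} := by
      intro i hi
      simp only [Set.mem_setOf_eq]
      rintro rfl
      exact h0 hi
    have hcard0 : b.fired.ncard ≤ n := by
      have := Set.ncard_le_ncard hsub (Set.toFinite _)
      rwa [ncard_ne_zero] at this
    -- all edges to unfired leaves are dirty, so the centre needs many brushes
    set U : Set (Fin (n+1)) := {i | i ≠ 0 ∧ i ∉ b.fired} with hU
    set T : Set (Sym2 (Fin (n+1))) := (fun i : Fin (n+1) => s((0 : Fin (n+1)), i)) '' U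
      with hT
    have hTsub : T ⊆ {e ∈ b.dirty | (0 : Fin (n+1)) ∈ e} := by
      rintro e ⟨i, ⟨hi0, hif⟩, rfl⟩
      exact ⟨ha i hi0 hif, by simp⟩
    have hTcard : T.ncard = U.ncard := by
      rw [hT]
      refine Set.ncard_image_of_injOn ?_
      rintro a ⟨ha0, -⟩ b ⟨hb0, -⟩ hab
      rw [Sym2.eq_iff] at hab
      rcases hab with ⟨-, h⟩ | ⟨h1, h2⟩
      · exact h
      · exact absurd h1.symm hb0
    have hUcard : U.ncard = n - b.fired.ncard := by
      have hUeq : U = (insert (0 : Fin (n+1)) b.fired)ᶜ := by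
        ext i
        simp only [hU, Set.mem_setOf_eq, Set.mem_compl_iff, Set.mem_insert_iff, not_or]
      have h2 := Set.ncard_add_ncard_compl (insert (0 : Fin (n+1)) b.fired)
      rw [Set.ncard_insert_of_notMem h0, Nat.card_eq_fintype_card, Fintype.card_fin] at h2
      rw [hUeq]
      omega
    have hTle : T.ncard ≤ b.brushes 0 := by
      calc T.ncard ≤ ∑ᶠ e ∈ T, f e := by
            refine ncard_le_finsum (Set.toFinite _) ?_
            intro e heT
            have := hTsub heT
            simpa using hf1 e this.1 this.2
        _ ≤ ∑ᶠ e ∈ {e ∈ b.dirty | (0 : Fin (n+1)) ∈ e}, f e :=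
            finsum_mem_mono hTsub (Set.toFinite _) f
        _ ≤ b.brushes 0 := hsum
    -- the brushes at the centre were all paid for by the fired leaves
    have hbound : ∑ᶠ i ∈ b.fired, ω i ≤ ∑ᶠ i ∈ {i : Fin (n+1) | i ≠ 0}, ω i :=
      finsum_mem_mono hsub (Set.toFinite _) ω
    have hsplit := omega_split n ω
    omega
  · -- a leaf fires; the invariant is preserved
    left
    have hv0 : v ≠ 0 := hv
    have hvd : s(0, v) ∈ b.dirty := ha v hv0 hvf
    have hfv1 : 1 ≤ f s(0, v) := by simpa using hf1 s(0, v) hvd (by simp)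
    have hfle : f s(0, v) ≤ b.brushes v := by
      refine le_trans (single_le_finsum_mem (Set.toFinite _) ?_) hsum
      exact ⟨hvd, by simp⟩
    have hbv : b.brushes v ≤ ω v := hc v hv0
    have hnotedge : ∀ i : Fin (n+1), i ≠ 0 → s(v, i) ∉ b.dirty := by
      intro i hi0 hmem
      have := star_mem_edgeSet.mp (he hmem)
      obtain ⟨j, hj, hje⟩ := this
      rw [Sym2.eq_iff] at hje
      rcases hje with ⟨h1, h2⟩ | ⟨h1, h2⟩
      · exact hv0 h1
      · exact hi0 h2
    refine ⟨?_, ?_, ?_, ?_, ?_⟩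
    · rw [hfi]
      rintro (h | h)
      · exact hv h.symm
      · exact h0 h
    · intro i hi0 hif
      rw [hfi, Set.mem_insert_iff] at hif
      push_neg at hif
      rw [hdi]
      refine ⟨ha i hi0 hif.2, ?_⟩
      rw [Sym2.mem_iff]
      push_neg
      exact ⟨fun h => hv h, fun h => hif.1 h.symm⟩
    · rw [hdi]
      exact fun e he' => he he'.1
    · intro i hi0
      rw [hbr i, Set.indicator_of_notMem (hnotedge i hi0), add_zero]
      split_ifs with h
      · exact Nat.zero_le _
      · exact hc i hi0
    · rw [hbr 0, if_neg (fun h => hv h.symm), hfi]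
      have hswap : s(v, (0 : Fin (n+1))) = s(0, v) := Sym2.eq_swap
      rw [hswap, Set.indicator_of_mem hvd]
      rw [Set.ncard_insert_of_notMem hvf hFfin,
        finsum_mem_insert ω hvf hFfin]
      have h1v : 1 ≤ ω v := le_trans hfv1 (le_trans hfle hbv)
      have hfv : f s(0, v) ≤ ω v := le_trans hfle hbv
      omega

lemma star_lower (n : ℕ) (ω : Fin (n+1) → ℕ)
    (h : Cleans (starGraph n) false ω) : n ≤ 2 * ∑ᶠ v, ω v := by
  obtain ⟨c, hrel, hfin⟩ := h
  have key : ∀ c : BrushConfig (Fin (n+1)),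
      Relation.ReflTransGen (BrushStep (starGraph n) false)
        ⟨∅, (starGraph n).edgeSet, ω⟩ c →
      Good n ω c ∨ n ≤ 2 * ∑ᶠ v, ω v := by
    intro c hrel
    induction hrel with
    | refl =>
      left
      refine ⟨Set.notMem_empty _, ?_, le_refl _, fun i _ => le_refl _, ?_⟩
      · intro i hi0 _
        exact star_mem_edgeSet.mpr ⟨i, hi0, rfl⟩
      · rw [finsum_mem_empty]
        simp [Set.ncard_empty]
    | tail hab hbc ih =>
      rcases ih with hg | hdone
      · exact invariant_step ω hg hbc
      · exact Or.inr hdone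
  rcases key c hrel with hg | hdone
  · exfalso
    exact hg.1 (hfin ▸ Set.mem_univ 0)
  · exact hdone

theorem brushNumber_starGraph (n : ℕ) (hn : 3 ≤ n) :
    brushNumber (starGraph n) = (n + 1) / 2 := by
  set m := (n + 1) / 2 with hm
  have hm1 : 1 ≤ m := by omega
  have hmn : m ≤ n := by omega
  have hnm : n - m ≤ m := by omega
  have hmem : m ∈ {k | ∃ ω : Fin (n+1) → ℕ, Cleans (starGraph n) false ω ∧ ∑ᶠ v, ω v = k} :=
    ⟨starW n m, star_cleans n m hmn hnm hm1, starW_sum n m hmn⟩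
  refine le_antisymm (Nat.sInf_le hmem) ?_
  refine le_csInf ⟨m, hmem⟩ ?_
  rintro k ⟨ω, hcl, rfl⟩
  have := star_lower n ω hcl
  omega

end Paper
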